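/- For every natural number n, the number of ways to make change of n using S equals Σ_{0 ≤ j ≤ M, j ≡ n (mod t)} a_j · C((n−j)/t + v − 1, v − 1), where C(·,·) is the binomial coefficient. Here M = Σ_{i=1}^{v} (t − t_i), and a_j is the number of v-tuples (c₁,…,c_v) ∈ ℕ^v with Σ_{i=1}^{v} c_i·t_i = j and c_i·t_i ≤ t − t_i for each i. -/

import Mathlib

open Finset

private lemma sab_card (v k : ℕ) (hv : 1 ≤ v) :
    Nat.card {q : Fin v → ℕ // ∑ i, q i = k} = (k + v - 1).choose (v - 1) := by
  have hcardM : ∀ f : Fin v →₀ ℕ, Multiset.card (Finsupp.toMultiset f) = ∑ i, f i := by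
    intro f
    rw [Finsupp.card_toMultiset, Finsupp.sum_fintype]
    · rfl
    · intro; rfl
  have e : {q : Fin v → ℕ // ∑ i, q i = k} ≃ Sym (Fin v) k := by
    refine Equiv.subtypeEquiv
      ((Finsupp.equivFunOnFinite (α := Fin v) (M := ℕ)).symm.trans
        Multiset.toFinsupp.symm.toEquiv) (fun q => ?_)
    show (∑ i, q i = k) ↔ Multiset.card (Multiset.toFinsupp.symm (Finsupp.equivFunOnFinite.symm q)) = k
    have h1 : (Multiset.toFinsupp.symm (Finsupp.equivFunOnFinite.symm q) : Multiset (Fin v))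
        = Finsupp.toMultiset (Finsupp.equivFunOnFinite.symm q) := rfl
    rw [h1, hcardM]
    have : ∀ i, (Finsupp.equivFunOnFinite.symm q) i = q i := fun i => rfl
    simp [this]
  rw [Nat.card_congr e, Nat.card_eq_fintype_card, Sym.card_sym_eq_choose, Fintype.card_fin]
  have h2 : v + k - 1 = k + v - 1 := by omega
  rw [h2]
  have h3 := Nat.choose_symm (n := k + v - 1) (k := v - 1) (by omega)
  rw [show (k + v - 1) - (v - 1) = k by omega] at h3
  exact h3

private lemma natCard_eq_filter_card {v : ℕ} (p : (Fin v → ℕ) → Prop) [DecidablePred p] (b : ℕ)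
    (hb : ∀ c, p c → ∀ i, c i ≤ b) :
    Nat.card {c : Fin v → ℕ // p c} =
      ((Fintype.piFinset fun _ : Fin v => Finset.range (b + 1)).filter p).card := by
  rw [← Nat.card_eq_finsetCard]
  apply Nat.card_congr
  refine Equiv.subtypeEquivRight fun c => ?_
  simp only [mem_filter, Fintype.mem_piFinset, mem_range, Nat.lt_succ_iff]
  exact ⟨fun h => ⟨hb c h, h⟩, fun h => h.2⟩

/-- The change function for the coin set `{t₁,…,t_v}`: with `T = lcm(t₁,…,t_v)`,
`M = Σ_i (T − t_i)`, and `a_j` the number of `v`-tuples with `Σ c_i·t_i = j` and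
`c_i·t_i ≤ T − t_i` for each `i`, the number of ways to make change of `n` is
`Σ_{0 ≤ j ≤ M, j ≡ n (mod T)} a_j · C((n−j)/T + v − 1, v − 1)`
(where `(n−j)/T` is integer floor division, and the binomial coefficient vanishes
when its top argument is negative). -/
theorem change_function_formula (v : ℕ) (hv : 1 ≤ v) (t : Fin v → ℕ) (hpos : ∀ i, 0 < t i)
    (hmono : StrictMono t) (T : ℕ) (hT : T = Finset.univ.lcm t)
    (M : ℕ) (hM : M = ∑ i, (T - t i)) (a : ℕ → ℕ)
    (ha : ∀ j, a j = Nat.card {c : Fin v → ℕ //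
        (∑ i, c i * t i = j) ∧ ∀ i, c i * t i ≤ T - t i}) (n : ℕ) :
    Nat.card {c : Fin v → ℕ // ∑ i, c i * t i = n}
      = ∑ j ∈ (Finset.range (M + 1)).filter (fun j => j % T = n % T),
          a j * Nat.choose ((((n : ℤ) - (j : ℤ)) / (T : ℤ) + (v : ℤ) - 1).toNat) (v - 1) := by
  have hdvd : ∀ i, t i ∣ T := fun i => hT ▸ Finset.dvd_lcm (mem_univ i)
  have hT0 : 0 < T := by
    rcases Nat.eq_zero_or_pos T with h0 | h
    · exfalso
      rw [h0] at hT
      have h1 : Finset.univ.lcm t = 0 := by omega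
      rw [Finset.lcm_eq_zero_iff] at h1
      obtain ⟨i, -, hi⟩ := h1
      have := hpos i
      omega
    · exact h
  set d : Fin v → ℕ := fun i => T / t i with hd
  have hdt : ∀ i, d i * t i = T := fun i => Nat.div_mul_cancel (hdvd i)
  have hd0 : ∀ i, 0 < d i := fun i =>
    Nat.div_pos (Nat.le_of_dvd hT0 (hdvd i)) (hpos i)
  -- pointwise decomposition
  have key : ∀ c : Fin v → ℕ,
      ∑ i, c i * t i = (∑ i, (c i % d i) * t i) + T * ∑ i, c i / d i := by
    intro c
    rw [Finset.mul_sum, ← Finset.sum_add_distrib]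
    refine Finset.sum_congr rfl fun i _ => ?_
    conv_lhs => rw [← Nat.mod_add_div (c i) (d i)]
    rw [← hdt i]; ring
  have hrle : ∀ (x : ℕ) (i : Fin v), (x % d i) * t i ≤ T - t i := by
    intro x i
    have h1 : x % d i < d i := Nat.mod_lt _ (hd0 i)
    have h2 : (x % d i) * t i + t i ≤ T := by
      calc (x % d i) * t i + t i = (x % d i + 1) * t i := by ring
        _ ≤ d i * t i := Nat.mul_le_mul_right _ h1
        _ = T := hdt i
    omega
  have hlt : ∀ (r : Fin v → ℕ) (i : Fin v), r i * t i ≤ T - t i → r i < d i := by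
    intro r i h
    have : r i * t i < d i * t i := by
      rw [hdt i]; have := hpos i; omega
    exact Nat.lt_of_mul_lt_mul_right this
  classical
  set P : Finset (Fin v → ℕ) :=
    (Fintype.piFinset fun _ : Fin v => Finset.range (n + 1)).filter
      (fun c => ∑ i, c i * t i = n) with hPdef
  have hP : Nat.card {c : Fin v → ℕ // ∑ i, c i * t i = n} = P.card := by
    refine natCard_eq_filter_card _ n (fun c hc i => ?_)
    calc c i ≤ c i * t i := Nat.le_mul_of_pos_right _ (hpos i)
      _ ≤ ∑ i, c i * t i := Finset.single_le_sum (f := fun i => c i * t i) (fun i _ => Nat.zero_le _) (mem_univ i)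
      _ = n := hc
  set A : ℕ → Finset (Fin v → ℕ) := fun j =>
    (Fintype.piFinset fun _ : Fin v => Finset.range (j + 1)).filter
      (fun r => (∑ i, r i * t i = j) ∧ ∀ i, r i * t i ≤ T - t i) with hAdef
  have hA : ∀ j, a j = (A j).card := by
    intro j
    rw [ha j]
    refine natCard_eq_filter_card _ j (fun c hc i => ?_)
    calc c i ≤ c i * t i := Nat.le_mul_of_pos_right _ (hpos i)
      _ ≤ ∑ i, c i * t i := Finset.single_le_sum (f := fun i => c i * t i) (fun i _ => Nat.zero_le _) (mem_univ i)
      _ = j := hc.1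
  set B : ℕ → Finset (Fin v → ℕ) := fun j =>
    (Fintype.piFinset fun _ : Fin v => Finset.range (n + 1)).filter
      (fun q => j + T * ∑ i, q i = n) with hBdef
  set f : (Fin v → ℕ) → ℕ := fun c => ∑ i, (c i % d i) * t i with hfdef
  have hfS : ∀ c ∈ P, f c ∈ (Finset.range (M + 1)).filter (fun j => j % T = n % T) := by
    intro c hc
    have hsum : ∑ i, c i * t i = n := (Finset.mem_filter.mp hc).2
    rw [Finset.mem_filter, Finset.mem_range, Nat.lt_succ_iff]
    constructor
    · rw [hM]
      exact Finset.sum_le_sum fun i _ => hrle (c i) i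
    · show f c % T = n % T
      have hkey := key c
      rw [hsum] at hkey
      have hfc : f c = ∑ i, (c i % d i) * t i := rfl
      rw [hfc, hkey, Nat.add_mul_mod_self_left]
  have hMv1 : v = 1 → M = 0 := by
    intro h1
    subst h1
    have huniv : (Finset.univ : Finset (Fin 1)) = {0} := by
      apply Finset.eq_singleton_iff_unique_mem.mpr
      exact ⟨mem_univ _, fun x _ => Subsingleton.elim x 0⟩
    have hT1 : T = t 0 := by
      rw [hT, huniv, Finset.lcm_singleton]
      simp
    rw [hM, huniv, Finset.sum_singleton, hT1]
    exact Nat.sub_self _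
  rw [hP, Finset.card_eq_sum_card_fiberwise hfS]
  clear hM hP
  refine Finset.sum_congr rfl fun j hj => ?_
  obtain ⟨hjM, hjmod⟩ := Finset.mem_filter.mp hj
  rw [Finset.mem_range, Nat.lt_succ_iff] at hjM
  -- the bijection with A j ×ˢ B j
  have hcard : (P.filter fun c => f c = j).card = ((A j) ×ˢ (B j)).card := by
    refine Finset.card_nbij' (fun c => (fun i => c i % d i, fun i => c i / d i))
      (fun p => fun i => p.1 i + p.2 i * d i) ?_ ?_ ?_ ?_
    · intro c hc
      rw [Finset.mem_coe] at hc ⊢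
      rw [Finset.mem_filter] at hc
      obtain ⟨hcP, hcf⟩ := hc
      rw [Finset.mem_filter] at hcP
      obtain ⟨-, hsum⟩ := hcP
      have hkey := key c
      have hcf' : (∑ i, (c i % d i) * t i) = j := hcf
      rw [hsum, hcf'] at hkey
      rw [Finset.mem_product]
      constructor
      · rw [Finset.mem_filter, Fintype.mem_piFinset]
        refine ⟨fun i => ?_, hcf, fun i => hrle (c i) i⟩
        rw [Finset.mem_range, Nat.lt_succ_iff]
        calc c i % d i ≤ (c i % d i) * t i := Nat.le_mul_of_pos_right _ (hpos i)
          _ ≤ ∑ i, (c i % d i) * t i :=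
              Finset.single_le_sum (f := fun i => (c i % d i) * t i) (fun i _ => Nat.zero_le _) (mem_univ i)
          _ = j := hcf
      · rw [Finset.mem_filter, Fintype.mem_piFinset]
        refine ⟨fun i => ?_, hkey.symm⟩
        rw [Finset.mem_range, Nat.lt_succ_iff]
        show c i / d i ≤ n
        have h1 : c i / d i ≤ ∑ i, c i / d i :=
          Finset.single_le_sum (f := fun i => c i / d i) (fun i _ => Nat.zero_le _) (mem_univ i)
        have h2 : ∑ i, c i / d i ≤ T * ∑ i, c i / d i :=
          Nat.le_mul_of_pos_left _ hT0
        omega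
    · intro p hp
      rw [Finset.mem_coe] at hp ⊢
      rw [Finset.mem_product] at hp
      obtain ⟨hpA, hpB⟩ := hp
      rw [Finset.mem_filter, Fintype.mem_piFinset] at hpA hpB
      obtain ⟨-, hsumA, hbdA⟩ := hpA
      obtain ⟨-, hsumB⟩ := hpB
      have hmodd : ∀ i, (p.1 i + p.2 i * d i) % d i = p.1 i := by
        intro i
        rw [Nat.add_mul_mod_self_right, Nat.mod_eq_of_lt (hlt p.1 i (hbdA i))]
      have hsum : ∑ i, (p.1 i + p.2 i * d i) * t i = n := by
        have : ∀ i, (p.1 i + p.2 i * d i) * t i = p.1 i * t i + T * p.2 i := by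
          intro i; rw [← hdt i]; ring
        rw [Finset.sum_congr rfl fun i _ => this i, Finset.sum_add_distrib,
          ← Finset.mul_sum, hsumA]
        exact hsumB
      rw [Finset.mem_filter]
      constructor
      · rw [Finset.mem_filter, Fintype.mem_piFinset]
        refine ⟨fun i => ?_, hsum⟩
        rw [Finset.mem_range, Nat.lt_succ_iff]
        calc p.1 i + p.2 i * d i ≤ (p.1 i + p.2 i * d i) * t i :=
              Nat.le_mul_of_pos_right _ (hpos i)
          _ ≤ ∑ i, (p.1 i + p.2 i * d i) * t i :=
              Finset.single_le_sum (f := fun i => (p.1 i + p.2 i * d i) * t i) (fun i _ => Nat.zero_le _) (mem_univ i)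
          _ = n := hsum
      · show (∑ i, ((p.1 i + p.2 i * d i) % d i) * t i) = j
        rw [Finset.sum_congr rfl fun i _ => by rw [hmodd i]]
        exact hsumA
    · intro c _
      funext i
      exact Nat.mod_add_div' (c i) (d i)
    · intro p hp
      rw [Finset.mem_coe] at hp
      rw [Finset.mem_product] at hp
      obtain ⟨hpA, -⟩ := hp
      rw [Finset.mem_filter, Fintype.mem_piFinset] at hpA
      obtain ⟨-, -, hbdA⟩ := hpA
      have hmodd : ∀ i, (p.1 i + p.2 i * d i) % d i = p.1 i := by
        intro i
        rw [Nat.add_mul_mod_self_right, Nat.mod_eq_of_lt (hlt p.1 i (hbdA i))]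
      have hdivd : ∀ i, (p.1 i + p.2 i * d i) / d i = p.2 i := by
        intro i
        rw [Nat.add_mul_div_right _ _ (hd0 i), Nat.div_eq_of_lt (hlt p.1 i (hbdA i)),
          Nat.zero_add]
      exact Prod.ext (funext hmodd) (funext hdivd)
  rw [hcard, Finset.card_product, ← hA j]
  by_cases hn : j ≤ n
  · -- j ≤ n : B j counts tuples with sum k = (n-j)/T
    have hdvd2 : T ∣ (n - j) :=
      Nat.dvd_of_mod_eq_zero (Nat.sub_mod_eq_zero_of_mod_eq hjmod.symm)
    obtain ⟨k, hk⟩ := hdvd2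
    have hk' : j + T * k = n := by omega
    have hkn : k ≤ n := by
      have : k ≤ T * k := Nat.le_mul_of_pos_left _ hT0
      omega
    have hBcard : (B j).card = (k + v - 1).choose (v - 1) := by
      rw [← sab_card v k hv]
      rw [natCard_eq_filter_card (fun q => ∑ i, q i = k) n
        (fun q hq i => by
          calc q i ≤ ∑ i, q i := Finset.single_le_sum (f := fun i => q i) (fun i _ => Nat.zero_le _) (mem_univ i)
            _ = k := hq
            _ ≤ n := hkn)]
      congr 1
      apply Finset.filter_congr
      intro q _
      constructor
      · intro h
        have h2 : T * ∑ i, q i = T * k := Nat.add_left_cancel (h.trans hk'.symm)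
        exact Nat.eq_of_mul_eq_mul_left hT0 h2
      · intro h; rw [h]; exact hk'
    rw [hBcard]
    congr 2
    have hcast : ((n : ℤ) - j) = (T : ℤ) * k := by
      push_cast [← hk']
      ring
    rw [hcast, Int.mul_ediv_cancel_left _ (by exact_mod_cast hT0.ne')]
    omega
  · -- j > n : both sides vanish
    push_neg at hn
    have hBempty : (B j) = ∅ := by
      rw [Finset.filter_eq_empty_iff]
      intro q _
      omega
    rw [hBempty, Finset.card_empty, Nat.mul_zero]
    have hdvd3 : T ∣ (j - n) :=
      Nat.dvd_of_mod_eq_zero (Nat.sub_mod_eq_zero_of_mod_eq hjmod)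
    have hjn : n + T ≤ j := by
      obtain ⟨m, hm⟩ := hdvd3
      have : 0 < m := by
        rcases Nat.eq_zero_or_pos m with h0 | h
        · rw [h0, Nat.mul_zero] at hm; omega
        · exact h
      have : T ≤ T * m := Nat.le_mul_of_pos_right _ this
      omega
    rcases eq_or_lt_of_le hv with hv1 | hv2
    · -- v = 1 : then M = 0, contradiction with j ≥ n + T > 0
      exfalso
      have hM0 : M = 0 := hMv1 hv1.symm
      omega
    · -- v ≥ 2 : the binomial coefficient vanishes
      have hneg : ((n : ℤ) - j) / T ≤ -1 := by
        have h1 : ((n : ℤ) - j) ≤ -T := by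
          have : (n : ℤ) + T ≤ j := by exact_mod_cast hjn
          omega
        calc ((n : ℤ) - j) / T ≤ (-T) / T := Int.ediv_le_ediv (by exact_mod_cast hT0) h1
          _ = -1 := by
            rw [Int.neg_ediv_of_dvd dvd_rfl, Int.ediv_self (by exact_mod_cast hT0.ne')]
      have : ((((n : ℤ) - j) / T + v - 1).toNat) < v - 1 := by omega
      rw [Nat.choose_eq_zero_of_lt this, Nat.mul_zero]
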